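/- Let S_1, ..., S_d ⊆ [n] be subsets with frac(S) := |S|/n. Suppose frac(⋃ S_i) = ε for some ε < 1, and for all i ≠ j, frac(S_i ∩ S_j) ≤ α · frac(S_i) · frac(S_j) for some α > 0 with αε < 1. Then ∑_{i=1}^d frac(S_i) ≤ ε/(1 - αε). -/

import Mathlib

theorem stmt1 (n d : ℕ) (hn : 0 < n) (S : Fin d → Finset (Fin n)) (ε α : ℝ)
    (hUnion : ((Finset.univ.biUnion S).card : ℝ) / n = ε)
    (hε : ε < 1) (hα : 0 < α) (hαε : α * ε < 1)
    (hInt : ∀ i j, i ≠ j →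
      ((S i ∩ S j).card : ℝ) / n ≤ α * (((S i).card : ℝ) / n) * (((S j).card : ℝ) / n)) :
    ∑ i, ((S i).card : ℝ) / n ≤ ε / (1 - α * ε) := by
  classical
  set U := Finset.univ.biUnion S with hUdef
  set u : ℝ := (U.card : ℝ) with hu
  have hsub : ∀ i, S i ⊆ U := fun i => Finset.subset_biUnion_of_mem S (Finset.mem_univ i)
  set f : Fin n → Fin d → ℝ := fun x i => if x ∈ S i then (1:ℝ) else 0 with hf
  set deg : Fin n → ℝ := fun x => ∑ i, f x i with hdeg
  have hcard : ∀ i, ((S i).card : ℝ) = ∑ x ∈ U, f x i := by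
    intro i
    have : U.filter (· ∈ S i) = S i := by
      rw [Finset.filter_mem_eq_inter, Finset.inter_eq_right.mpr (hsub i)]
    rw [hf]
    simp only [Finset.sum_boole, this]
  have hint : ∀ i j, ((S i ∩ S j).card : ℝ) = ∑ x ∈ U, f x i * f x j := by
    intro i j
    have h1 : ∀ x, f x i * f x j = if x ∈ S i ∩ S j then (1:ℝ) else 0 := by
      intro x
      by_cases h1 : x ∈ S i <;> by_cases h2 : x ∈ S j <;>
        simp [hf, h1, h2, Finset.mem_inter]
    have h2 : U.filter (· ∈ S i ∩ S j) = S i ∩ S j := by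
      rw [Finset.filter_mem_eq_inter, Finset.inter_eq_right.mpr
        ((Finset.inter_subset_left).trans (hsub i))]
    rw [Finset.sum_congr rfl fun x _ => h1 x]
    simp only [Finset.sum_boole, h2]
  set A : ℝ := ∑ i, ((S i).card : ℝ) with hA
  have hA' : A = ∑ x ∈ U, deg x := by
    rw [hA]
    simp only [hcard]
    rw [Finset.sum_comm]
  have hD2 : ∑ i, ∑ j, ((S i ∩ S j).card : ℝ) = ∑ x ∈ U, (deg x)^2 := by
    simp only [hint]
    calc ∑ i, ∑ j, ∑ x ∈ U, f x i * f x j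
        = ∑ i, ∑ x ∈ U, ∑ j, f x i * f x j :=
          Finset.sum_congr rfl fun i _ => Finset.sum_comm
      _ = ∑ x ∈ U, ∑ i, ∑ j, f x i * f x j := Finset.sum_comm
      _ = ∑ x ∈ U, (deg x)^2 := by
          refine Finset.sum_congr rfl fun x _ => ?_
          rw [hdeg, sq, Finset.sum_mul_sum]
  -- Cauchy-Schwarz
  have hCS : A ^ 2 ≤ u * ∑ x ∈ U, (deg x)^2 := by
    rw [hA', hu]
    exact_mod_cast sq_sum_le_card_mul_sum_sq (s := U) (f := deg)
  -- bound on sum of intersections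
  have hnpos : (0:ℝ) < n := by exact_mod_cast hn
  have hcnonneg : ∀ i, (0:ℝ) ≤ ((S i).card : ℝ) := fun i => by positivity
  have hoff : ∑ i, ∑ j ∈ Finset.univ.erase i, ((S i ∩ S j).card : ℝ)
      ≤ α * A * A / n := by
    have step : ∀ i, ∑ j ∈ Finset.univ.erase i, ((S i ∩ S j).card : ℝ)
        ≤ ∑ j ∈ Finset.univ.erase i, α * ((S i).card : ℝ) * ((S j).card : ℝ) / n := by
      intro i
      refine Finset.sum_le_sum fun j hj => ?_
      have hij : i ≠ j := (Finset.ne_of_mem_erase hj).symm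
      have h := (div_le_iff₀ hnpos).mp (hInt i j hij)
      calc ((S i ∩ S j).card : ℝ)
          ≤ α * (((S i).card : ℝ) / n) * (((S j).card : ℝ) / n) * n := h
        _ = α * ((S i).card : ℝ) * ((S j).card : ℝ) / n := by
            field_simp
    calc ∑ i, ∑ j ∈ Finset.univ.erase i, ((S i ∩ S j).card : ℝ)
        ≤ ∑ i, ∑ j ∈ Finset.univ.erase i, α * ((S i).card : ℝ) * ((S j).card : ℝ) / n :=
          Finset.sum_le_sum fun i _ => step i
      _ ≤ ∑ i, ∑ j, α * ((S i).card : ℝ) * ((S j).card : ℝ) / n := by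
          refine Finset.sum_le_sum fun i _ => ?_
          refine Finset.sum_le_sum_of_subset_of_nonneg (Finset.erase_subset _ _)
            fun j _ _ => by positivity
      _ = α * A * A / n := by
          have hAA : A * A = ∑ i, ∑ j, ((S i).card : ℝ) * ((S j).card : ℝ) := by
            rw [hA]; exact Finset.sum_mul_sum _ _ _ _
          rw [mul_assoc, hAA, Finset.mul_sum, Finset.sum_div]
          refine Finset.sum_congr rfl fun i _ => ?_
          rw [Finset.mul_sum, Finset.sum_div]
          refine Finset.sum_congr rfl fun j _ => ?_
          ring
  have hsplit : ∑ i, ∑ j, ((S i ∩ S j).card : ℝ)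
      = A + ∑ i, ∑ j ∈ Finset.univ.erase i, ((S i ∩ S j).card : ℝ) := by
    rw [hA, ← Finset.sum_add_distrib]
    refine Finset.sum_congr rfl fun i _ => ?_
    rw [show ((S i).card : ℝ) = ((S i ∩ S i).card : ℝ) by rw [Finset.inter_self]]
    rw [← Finset.add_sum_erase _ _ (Finset.mem_univ i)]
  have hD2le : ∑ x ∈ U, (deg x)^2 ≤ A + α * A * A / n := by
    rw [← hD2, hsplit]
    linarith [hoff]
  -- now the arithmetic
  have hgoalT : ∑ i, ((S i).card : ℝ) / n = A / n := by
    rw [hA, Finset.sum_div]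
  rw [hgoalT]
  have hAnonneg : 0 ≤ A := Finset.sum_nonneg fun i _ => hcnonneg i
  have hε' : ε = u / n := hUnion.symm
  have hunonneg : 0 ≤ u := by positivity
  have h1αε : 0 < 1 - α * ε := by linarith
  rcases eq_or_lt_of_le hAnonneg with hA0 | hApos
  · rw [← hA0, zero_div]
    exact div_nonneg (by rw [hε']; exact div_nonneg hunonneg hnpos.le) h1αε.le
  · have hUne : U.Nonempty := by
      by_contra h
      rw [Finset.not_nonempty_iff_eq_empty] at h
      have : A = 0 := by rw [hA']; simp [h]
      linarith
    have hupos : (0:ℝ) < u := by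
      rw [hu]; exact_mod_cast Finset.card_pos.mpr hUne
    have key : A ^ 2 ≤ u * (A + α * A * A / n) :=
      hCS.trans (mul_le_mul_of_nonneg_left hD2le hunonneg)
    have key2 : A ^ 2 * n ≤ u * A * n + α * u * (A * A) := by
      have h := mul_le_mul_of_nonneg_right key hnpos.le
      have : u * (A + α * A * A / n) * n = u * A * n + α * u * (A * A) := by
        field_simp
      linarith [h, this.le, this.ge]
    have key3 : A * n ≤ u * n + α * u * A := by nlinarith [key2, hApos]
    rw [hε']
    rw [div_le_div_iff₀ hnpos (by rw [← hε']; linarith)]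
    have expand : A * (1 - α * (u / n)) = (A * n - α * A * u) / n := by
      field_simp
    have hcanc : u / n * n = u := div_mul_cancel₀ u hnpos.ne'
    rw [expand, hcanc, div_le_iff₀ hnpos]
    linarith [key3]
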